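/- A complete minimal system {x_k} in H is hereditarily complete if and only if the set of projections Ω = {P_σ : σ ⊆ ℕ} is compact in the strong operator topology (equivalently, in the metric d_s(P,Q) = Σ_k ‖(P−Q)x_k‖/2^k). -/

import Mathlib

open Filter Topology

noncomputable section

variable {H : Type*} [NormedAddCommGroup H] [InnerProductSpace ℂ H] [CompleteSpace H]

/-- Closed linear span of a set of vectors. -/
def clSpan (s : Set H) : Submodule ℂ H := (Submodule.span ℂ s).topologicalClosure

instance (s : Set H) : CompleteSpace (clSpan s) :=
  (Submodule.isClosed_topologicalClosure _).completeSpace_coe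

/-- Orthogonal projection onto the closed linear span of `s`, as a map `H → H`. -/
def projS (s : Set H) : H →L[ℂ] H :=
  (clSpan s).subtypeL ∘L (clSpan s).orthogonalProjection

/-- The system `x` is complete: its closed linear span is all of `H`. -/
def IsCompleteSystem (x : ℕ → H) : Prop := clSpan (Set.range x) = ⊤

/-- The system `x` is minimal: no vector lies in the closed span of the others. -/
def IsMinimalSystem (x : ℕ → H) : Prop :=
  ∀ k, x k ∉ clSpan (x '' {j | j ≠ k})

/-- `y` is biorthogonal to `x`. -/
def IsBiorthogonal (x y : ℕ → H) : Prop :=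
  ∀ k j, (inner ℂ (x k) (y j) : ℂ) = if k = j then 1 else 0

local notation "⟪" a ", " b "⟫" => @inner ℂ _ _ a b

lemma projS_apply (s : Set H) (v : H) :
    projS s v = ((clSpan s).orthogonalProjection v : H) := rfl

lemma mem_clSpan_self {s : Set H} {v : H} (hv : v ∈ s) : v ∈ clSpan s :=
  Submodule.le_topologicalClosure _ (Submodule.subset_span hv)

lemma mem_orthogonal_span {S : Set H} {w : H} (h : ∀ u ∈ S, ⟪u, w⟫ = 0) :
    w ∈ (Submodule.span ℂ S)ᗮ := by
  rw [Submodule.mem_orthogonal]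
  intro u hu
  induction hu using Submodule.span_induction with
  | mem u hu => exact h u hu
  | zero => exact inner_zero_left w
  | add u v _ _ hu hv => rw [inner_add_left, hu, hv, add_zero]
  | smul a u _ hu => rw [inner_smul_left, hu, mul_zero]

lemma clSpan_orthogonal (S : Set H) : (clSpan S)ᗮ = (Submodule.span ℂ S)ᗮ := by
  rw [clSpan, ← Submodule.orthogonal_orthogonal_eq_closure,
    Submodule.triorthogonal_eq_orthogonal]

lemma norm_projS_apply_le (s : Set H) (u : H) : ‖projS s u‖ ≤ ‖u‖ := by
  rw [projS_apply]
  have h1 : ‖((clSpan s).orthogonalProjection u : H)‖ = ‖(clSpan s).orthogonalProjection u‖ := rfl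
  calc ‖((clSpan s).orthogonalProjection u : H)‖
      = ‖(clSpan s).orthogonalProjection u‖ := h1
    _ ≤ ‖(clSpan s).orthogonalProjection‖ * ‖u‖ := ((clSpan s).orthogonalProjection).le_opNorm u
    _ ≤ 1 * ‖u‖ := by
        exact mul_le_mul_of_nonneg_right (Submodule.orthogonalProjectionOnto_norm_le _) (norm_nonneg u)
    _ = ‖u‖ := one_mul _

section Systems

variable {x y : ℕ → H}

lemma projS_x_of_mem {s : Set ℕ} {k : ℕ} (hk : k ∈ s) : projS (x '' s) (x k) = x k := by
  rw [projS_apply]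
  exact Submodule.starProjection_eq_self_iff.2 (mem_clSpan_self ⟨k, hk, rfl⟩)

lemma y_mem_orthogonal (hbi : IsBiorthogonal x y) {s : Set ℕ} {k : ℕ} (hk : k ∉ s) :
    y k ∈ (clSpan (x '' s))ᗮ := by
  rw [clSpan_orthogonal]
  apply mem_orthogonal_span
  rintro _ ⟨j, hj, rfl⟩
  rw [hbi j k, if_neg]
  rintro rfl
  exact hk hj

lemma projS_y_of_not_mem (hbi : IsBiorthogonal x y) {s : Set ℕ} {k : ℕ} (hk : k ∉ s) :
    projS (x '' s) (y k) = 0 := by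
  rw [projS_apply,
    Submodule.orthogonalProjectionOnto_apply_of_mem_orthogonal (y_mem_orthogonal hbi hk)]
  rfl

/-- Vectors in the (algebraic) span of `x''σ ∪ y''σᶜ` only "see" finitely many indices: the
projections `P_τ` agree on them as soon as `τ` agrees with `σ` on a suitable finite set. -/
lemma exists_finset_agree (hbi : IsBiorthogonal x y) {σ : Set ℕ} {w : H}
    (hw : w ∈ Submodule.span ℂ (x '' σ ∪ y '' σᶜ)) :
    ∃ F : Finset ℕ, ∀ τ : Set ℕ, (∀ k ∈ F, (k ∈ τ ↔ k ∈ σ)) →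
      projS (x '' τ) w = projS (x '' σ) w := by
  induction hw using Submodule.span_induction with
  | mem u hu =>
    rcases hu with ⟨k, hk, rfl⟩ | ⟨k, hk, rfl⟩
    · exact ⟨{k}, fun τ hτ => by
        rw [projS_x_of_mem ((hτ k (Finset.mem_singleton_self k)).2 hk), projS_x_of_mem hk]⟩
    · exact ⟨{k}, fun τ hτ => by
        rw [projS_y_of_not_mem hbi hk,
          projS_y_of_not_mem hbi (fun h => hk ((hτ k (Finset.mem_singleton_self k)).1 h))]⟩
  | zero => exact ⟨∅, fun τ _ => by simp⟩
  | add u v _ _ hu hv =>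
    obtain ⟨F₁, h₁⟩ := hu
    obtain ⟨F₂, h₂⟩ := hv
    refine ⟨F₁ ∪ F₂, fun τ hτ => ?_⟩
    rw [map_add, map_add, h₁ τ (fun k hk => hτ k (Finset.mem_union_left _ hk)),
      h₂ τ (fun k hk => hτ k (Finset.mem_union_right _ hk))]
  | smul a u _ hu =>
    obtain ⟨F, hF⟩ := hu
    exact ⟨F, fun τ hτ => by rw [map_smul, map_smul, hF τ hτ]⟩

end Systems

/-- A complete minimal system is hereditarily complete iff the family of projections
`Ω = {P_σ : σ ⊆ ℕ}` is compact in the strong operator topology (realized as the topology of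
pointwise convergence on `H → H`). -/
theorem hereditarily_complete_iff_compact_projections [TopologicalSpace.SeparableSpace H]
    (x y : ℕ → H) (hc : IsCompleteSystem x) (hmin : IsMinimalSystem x)
    (hbi : IsBiorthogonal x y) (hnorm : ∀ k, ‖x k‖ = 1) :
    (∀ N : Set ℕ, clSpan (x '' N ∪ y '' Nᶜ) = ⊤) ↔
      IsCompact (Set.range fun σ : Set ℕ => fun v : H => projS (x '' σ) v) := by
  constructor
  · -- hereditary completeness ⇒ compactness
    intro hH
    classical
    have hrange : (Set.range fun σ : Set ℕ => fun v : H => projS (x '' σ) v) =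
        (fun χ : ℕ → Bool => fun v : H => projS (x '' {k | χ k = true}) v) '' Set.univ := by
      ext φ
      constructor
      · rintro ⟨σ, rfl⟩
        refine ⟨fun k => decide (k ∈ σ), Set.mem_univ _, ?_⟩
        have h : {k | decide (k ∈ σ) = true} = σ := by ext k; simp
        simp only [h]
      · rintro ⟨χ, -, rfl⟩
        exact ⟨{k | χ k = true}, rfl⟩
    rw [hrange]
    apply IsCompact.image isCompact_univ
    apply continuous_pi
    intro v
    rw [continuous_iff_continuousAt]
    intro χ₀
    set σ : Set ℕ := {k | χ₀ k = true} with hσ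
    rw [ContinuousAt, Metric.tendsto_nhds]
    intro ε hε
    -- get an approximant in the span of `x''σ ∪ y''σᶜ`
    have hv : v ∈ closure (Submodule.span ℂ (x '' σ ∪ y '' σᶜ) : Set H) := by
      rw [← Submodule.topologicalClosure_coe]
      rw [show (Submodule.span ℂ (x '' σ ∪ y '' σᶜ)).topologicalClosure = clSpan _ from rfl, hH σ]
      trivial
    obtain ⟨w, hw, hwv⟩ := Metric.mem_closure_iff.1 hv (ε / 3) (by linarith)
    obtain ⟨F, hF⟩ := exists_finset_agree hbi hw
    have hopen : IsOpen {χ : ℕ → Bool | ∀ k ∈ F, χ k = χ₀ k} := by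
      have : {χ : ℕ → Bool | ∀ k ∈ F, χ k = χ₀ k} =
          ⋂ k ∈ F, (fun χ : ℕ → Bool => χ k) ⁻¹' {χ₀ k} := by
        ext χ; simp
      rw [this]
      exact isOpen_biInter_finset fun k _ =>
        (continuous_apply k).isOpen_preimage _ (isOpen_discrete _)
    have hmem : χ₀ ∈ {χ : ℕ → Bool | ∀ k ∈ F, χ k = χ₀ k} := fun k _ => rfl
    filter_upwards [hopen.mem_nhds hmem] with χ hχ
    have hagree : ∀ k ∈ F, (k ∈ {k | χ k = true} ↔ k ∈ σ) := by
      intro k hk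
      simp only [Set.mem_setOf_eq, hσ, hχ k hk]
    have heq : projS (x '' {k | χ k = true}) w = projS (x '' σ) w := hF _ hagree
    rw [dist_eq_norm]
    have hd : (fun v : H => projS (x '' {k | χ k = true}) v) v - projS (x '' σ) v =
        projS (x '' {k | χ k = true}) (v - w) - projS (x '' σ) (v - w) := by
      simp only [map_sub, heq]
      abel
    rw [hd]
    have hvw : ‖v - w‖ < ε / 3 := by rwa [← dist_eq_norm]
    calc ‖projS (x '' {k | χ k = true}) (v - w) - projS (x '' σ) (v - w)‖
        ≤ ‖projS (x '' {k | χ k = true}) (v - w)‖ + ‖projS (x '' σ) (v - w)‖ := norm_sub_le _ _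
      _ ≤ ‖v - w‖ + ‖v - w‖ := add_le_add (norm_projS_apply_le _ _) (norm_projS_apply_le _ _)
      _ < ε / 3 + ε / 3 := by linarith
      _ < ε := by linarith
  · -- compactness ⇒ hereditary completeness
    intro hcpt N
    rw [show clSpan (x '' N ∪ y '' Nᶜ) = (Submodule.span ℂ (x '' N ∪ y '' Nᶜ)).topologicalClosure
      from rfl, Submodule.topologicalClosure_eq_top_iff, Submodule.eq_bot_iff]
    intro v hv
    -- the decreasing sequence of index sets
    set σn : ℕ → Set ℕ := fun n => N ∪ {k | k ∉ N ∧ n ≤ k} with hσn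
    set f : Filter (H → H) := Filter.map (fun n => fun w : H => projS (x '' σn n) w) atTop with hf
    have hle : f ≤ 𝓟 (Set.range fun σ : Set ℕ => fun v : H => projS (x '' σ) v) := by
      rw [le_principal_iff, hf, mem_map]
      exact Filter.Eventually.of_forall fun n => Set.mem_range_self (σn n)
    obtain ⟨φ, hmem, hcl⟩ := hcpt hle
    obtain ⟨τ, rfl⟩ := hmem
    -- transfer the cluster point to each coordinate
    have hcoord : ∀ u : H, ClusterPt (projS (x '' τ) u)
        (Filter.map (fun n => projS (x '' σn n) u) atTop) := by
      intro u
      have := hcl.map (f := fun g : H → H => g u) ((continuous_apply u).continuousAt)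
        tendsto_map
      rwa [hf, Filter.map_map] at this
    have heval : ∀ u c : H, (∀ᶠ n in atTop, projS (x '' σn n) u = c) →
        projS (x '' τ) u = c := by
      intro u c hev
      have hmap : Filter.map (fun n => projS (x '' σn n) u) atTop = pure c := by
        rw [Filter.map_congr hev, Filter.map_const]
      have h1 := hcoord u
      rw [hmap, ← Filter.principal_singleton, ← mem_closure_iff_clusterPt,
        closure_singleton] at h1
      exact h1
    -- τ ⊆ N
    have hτN : τ ⊆ N := by
      intro k hk
      by_contra hkN
      have h0 : projS (x '' τ) (y k) = 0 := by
        apply heval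
        filter_upwards [eventually_ge_atTop (k + 1)] with n hn
        apply projS_y_of_not_mem hbi
        rintro (h | ⟨-, h⟩)
        · exact hkN h
        · omega
      have hyk : y k ∈ (clSpan (x '' τ))ᗮ := by
        have h1 : y k - projS (x '' τ) (y k) ∈ _ :=
          Submodule.sub_starProjection_mem_orthogonal (K := clSpan (x '' τ)) (y k)
        rw [h0, sub_zero] at h1
        exact h1
      have hxk : x k ∈ clSpan (x '' τ) := mem_clSpan_self ⟨k, hk, rfl⟩
      have h2 := (Submodule.mem_orthogonal _ _).1 hyk (x k) hxk
      rw [hbi k k, if_pos rfl] at h2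
      exact one_ne_zero h2
    -- v belongs to each clSpan (x '' σn n)
    have hvmem : ∀ n, v ∈ clSpan (x '' σn n) := by
      intro n
      rw [← Submodule.orthogonal_orthogonal (clSpan (x '' σn n)), Submodule.mem_orthogonal]
      intro w hw
      have hxw : ∀ k ∈ σn n, (inner ℂ (x k) w : ℂ) = 0 := fun k hk =>
        (Submodule.mem_orthogonal _ _).1 hw (x k) (mem_clSpan_self ⟨k, hk, rfl⟩)
      -- represent w as a finite combination of the `y j`, `j < n`
      have hrep : w = ∑ j ∈ Finset.range n, (inner ℂ (x j) w : ℂ) • y j := by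
        have hzero : ∀ k, (inner ℂ (x k)
            (w - ∑ j ∈ Finset.range n, (inner ℂ (x j) w : ℂ) • y j) : ℂ) = 0 := by
          intro k
          rw [inner_sub_right, inner_sum]
          simp only [inner_smul_right]
          by_cases hkn : k ∈ Finset.range n
          · rw [Finset.sum_eq_single_of_mem k hkn (fun j _ hj => by
              rw [hbi k j, if_neg (Ne.symm hj), mul_zero])]
            rw [hbi k k, if_pos rfl, mul_one, sub_self]
          · have hsum : ∑ j ∈ Finset.range n, (inner ℂ (x j) w : ℂ) * (inner ℂ (x k) (y j) : ℂ)
                = 0 := by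
              apply Finset.sum_eq_zero
              intro j hj
              rw [hbi k j, if_neg, mul_zero]
              rintro rfl
              exact hkn hj
            rw [hsum, sub_zero]
            apply hxw
            rw [Finset.mem_range, not_lt] at hkn
            by_cases hkN : k ∈ N
            · exact Or.inl hkN
            · exact Or.inr ⟨hkN, hkn⟩
        have hmem0 : w - ∑ j ∈ Finset.range n, (inner ℂ (x j) w : ℂ) • y j ∈
            (Submodule.span ℂ (Set.range x))ᗮ := by
          apply mem_orthogonal_span
          rintro _ ⟨k, rfl⟩
          exact hzero k
        rw [← clSpan_orthogonal] at hmem0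
        rw [show clSpan (Set.range x) = ⊤ from hc, Submodule.top_orthogonal_eq_bot,
          Submodule.mem_bot, sub_eq_zero] at hmem0
        exact hmem0
      -- now compute ⟪w, v⟫
      rw [hrep, sum_inner]
      apply Finset.sum_eq_zero
      intro j hj
      rw [inner_smul_left]
      by_cases hjN : j ∈ N
      · rw [hxw j (Or.inl hjN)]
        simp
      · have hyv : (inner ℂ (y j) v : ℂ) = 0 :=
          (Submodule.mem_orthogonal _ _).1 hv (y j)
            (Submodule.subset_span (Or.inr ⟨j, hjN, rfl⟩))
        rw [hyv, mul_zero]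
    -- the v-coordinate of the cluster point is v itself
    have hφv : projS (x '' τ) v = v := by
      apply heval
      apply Filter.Eventually.of_forall
      intro n
      rw [projS_apply]
      exact Submodule.starProjection_eq_self_iff.2 (hvmem n)
    have hvτ : v ∈ clSpan (x '' τ) := by
      rw [projS_apply] at hφv
      exact Submodule.starProjection_eq_self_iff.1 hφv
    -- but v is orthogonal to clSpan (x '' τ) since τ ⊆ N
    have hvo : v ∈ (clSpan (x '' τ))ᗮ := by
      rw [clSpan_orthogonal]
      apply Submodule.orthogonal_le (Submodule.span_mono ?_) hv
      intro u hu
      rcases hu with ⟨k, hk, rfl⟩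
      exact Or.inl ⟨k, hτN hk, rfl⟩
    have : (inner ℂ v v : ℂ) = 0 := (Submodule.mem_orthogonal _ _).1 hvo v hvτ
    exact inner_self_eq_zero.1 this
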